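/- arXiv:1710.07887 — 2 statements merged into one kernel-verified Lean document; each statement's English description precedes it below -/
import Mathlib

section
/- (Generalized Euler theorem) Let g : ℝ^d → ℝ be convex and positive homogeneous of degree k > 0. Then for every x ∈ ℝ^d and every subgradient v ∈ ∂g(x), we have ⟨v, x⟩ = k·g(x). -/
open RealInnerProductSpace

theorem euler_generalized (d : ℕ) (k : ℝ) (hk : 0 < k)
    (g : EuclideanSpace ℝ (Fin d) → ℝ)
    (hconv : ConvexOn ℝ Set.univ g)
    (hhom : ∀ α : ℝ, 0 < α → ∀ x, g (α • x) = α ^ k * g x)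
    (x v : EuclideanSpace ℝ (Fin d))
    (hv : ∀ y, g x + ⟪v, y - x⟫ ≤ g y) :
    ⟪v, x⟫ = k * g x := by
  set φ : ℝ → ℝ := fun α => α ^ k * g x - g x - (α - 1) * ⟪v, x⟫ with hφ
  have hnonneg : ∀ α : ℝ, 0 < α → 0 ≤ φ α := by
    intro α hα
    have h1 := hv (α • x)
    rw [hhom α hα x] at h1
    have h2 : ⟪v, α • x - x⟫ = (α - 1) * ⟪v, x⟫ := by
      rw [inner_sub_right, real_inner_smul_right]; ring
    rw [h2] at h1
    simp only [hφ]
    linarith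
  have hmin : IsLocalMin φ 1 := by
    have hmem : Set.Ioi (0 : ℝ) ∈ nhds (1 : ℝ) :=
      Ioi_mem_nhds (by norm_num)
    filter_upwards [hmem] with α hα
    have : φ 1 = 0 := by simp [hφ]
    rw [this]
    exact hnonneg α hα
  have hderiv : HasDerivAt φ (k * g x - ⟪v, x⟫) 1 := by
    have h1 : HasDerivAt (fun α : ℝ => α ^ k) (k * (1 : ℝ) ^ (k - 1)) 1 :=
      Real.hasDerivAt_rpow_const (Or.inl one_ne_zero)
    have h1' : HasDerivAt (fun α : ℝ => α ^ k) k 1 := by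
      simpa using h1
    have h2 : HasDerivAt (fun α : ℝ => α ^ k * g x) (k * g x) 1 := by
      simpa using h1'.mul_const (g x)
    have h3 : HasDerivAt (fun α : ℝ => (α - 1) * ⟪v, x⟫) ⟪v, x⟫ 1 := by
      simpa using ((hasDerivAt_id (1 : ℝ)).sub_const 1).mul_const ⟪v, x⟫
    exact (h2.sub_const (g x)).sub h3
  have := hmin.hasDerivAt_eq_zero hderiv
  linarith
end

section
/- Let f : ℝ^d → ℝ be convex, positive homogeneous of degree r > 1, and positive away from the origin. Then for every fixed x ∈ ℝ^d, the function β ↦ ⟨x̂(β), β⟩, where x̂(β) is any maximizer of x̂ ↦ ⟨x̂, β⟩ - f(x̂ - x), is well-defined (independent of the choice of maximizer), equals ⟨x, β⟩ + s·f*(β) with 1/r + 1/s = 1, and is convex in β. -/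
open RealInnerProductSpace

theorem best_response_inner_convex (d : ℕ) (r s : ℝ) (hr : 1 < r)
    (hrs : 1 / r + 1 / s = 1)
    (f : EuclideanSpace ℝ (Fin d) → ℝ)
    (hconv : ConvexOn ℝ Set.univ f)
    (hhom : ∀ α : ℝ, 0 < α → ∀ z, f (α • z) = α ^ r * f z)
    (hpos : ∀ z, z ≠ 0 → 0 < f z)
    (x : EuclideanSpace ℝ (Fin d)) :
    (∀ β xh : EuclideanSpace ℝ (Fin d),
        (∀ z, ⟪z, β⟫ - f (z - x) ≤ ⟪xh, β⟫ - f (xh - x)) →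
        ⟪xh, β⟫ = ⟪x, β⟫ + s * sSup (Set.range fun z => ⟪β, z⟫ - f z)) ∧
    ConvexOn ℝ Set.univ
      (fun β : EuclideanSpace ℝ (Fin d) =>
        ⟪x, β⟫ + s * sSup (Set.range fun z => ⟪β, z⟫ - f z)) := by
  have hr0 : (0:ℝ) < r := lt_trans one_pos hr
  -- f 0 = 0
  have hf0 : f 0 = 0 := by
    have h := hhom 2 (by norm_num) 0
    rw [smul_zero] at h
    have h2 : (1:ℝ) < (2:ℝ) ^ r := (Real.one_lt_rpow_iff_of_pos (by norm_num)).mpr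
      (Or.inl ⟨by norm_num, hr0⟩)
    have key : ((2:ℝ) ^ r - 1) * f 0 = 0 := by linear_combination -h
    rcases mul_eq_zero.mp key with h' | h'
    · exfalso; linarith
    · exact h'
  -- relations for s
  have hrne : r ≠ 0 := ne_of_gt hr0
  have hsne : s ≠ 0 := by
    intro h
    rw [h, div_zero, add_zero] at hrs
    have : r = 1 := by
      field_simp at hrs
      linarith
    linarith
  have hs_eq : s * (r - 1) = r := by
    field_simp at hrs
    linarith
  have hs_pos : 0 < s := by nlinarith
  -- boundedness above of the conjugate defining set
  have hbdd : ∀ β : EuclideanSpace ℝ (Fin d),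
      BddAbove (Set.range fun z => ⟪β, z⟫ - f z) := by
    intro β
    by_cases hd : ∀ z : EuclideanSpace ℝ (Fin d), z = 0
    · refine ⟨0, ?_⟩
      rintro v ⟨z, rfl⟩
      simp [hd z, hf0]
    · push_neg at hd
      obtain ⟨z0, hz0⟩ := hd
      have hcont : Continuous f := by
        rw [← continuousOn_univ]
        exact hconv.continuousOn isOpen_univ
      have hsph : (Metric.sphere (0:EuclideanSpace ℝ (Fin d)) 1).Nonempty := by
        refine ⟨‖z0‖⁻¹ • z0, ?_⟩
        have hn : ‖z0‖ ≠ 0 := norm_ne_zero_iff.mpr hz0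
        simp [norm_smul, abs_of_nonneg (inv_nonneg.mpr (norm_nonneg z0)),
          inv_mul_cancel₀ hn]
      obtain ⟨u, hu, humin⟩ :=
        (isCompact_sphere (0:EuclideanSpace ℝ (Fin d)) 1).exists_isMinOn hsph
          hcont.continuousOn
      have hu1 : ‖u‖ = 1 := by simpa using hu
      have hc : 0 < f u := hpos u (by
        intro h
        rw [h] at hu1
        simp at hu1)
      set c := f u with hcdef
      have hlow : ∀ z : EuclideanSpace ℝ (Fin d), z ≠ 0 → c * ‖z‖ ^ r ≤ f z := by
        intro z hz
        have hn : 0 < ‖z‖ := norm_pos_iff.mpr hz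
        have hmem : ‖z‖⁻¹ • z ∈ Metric.sphere (0:EuclideanSpace ℝ (Fin d)) 1 := by
          simp [norm_smul, abs_of_nonneg (inv_nonneg.mpr (norm_nonneg z)),
            inv_mul_cancel₀ hn.ne']
        have heq : f z = ‖z‖ ^ r * f (‖z‖⁻¹ • z) := by
          have h := hhom ‖z‖ hn (‖z‖⁻¹ • z)
          rw [smul_inv_smul₀ hn.ne'] at h
          exact h
        have hmin := humin hmem
        have hpr : (0:ℝ) < ‖z‖ ^ r := Real.rpow_pos_of_pos hn r
        rw [heq]
        have : c ≤ f (‖z‖⁻¹ • z) := hmin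
        nlinarith
      set B := ‖β‖ with hBdef
      set T := (B / c) ^ (1 / (r - 1)) with hTdef
      have hB0 : 0 ≤ B := norm_nonneg β
      have hT0 : 0 ≤ T := Real.rpow_nonneg (div_nonneg hB0 hc.le) _
      refine ⟨B * T, ?_⟩
      rintro v ⟨z, rfl⟩
      dsimp only
      by_cases hz : z = 0
      · simp only [hz, inner_zero_right, hf0, sub_zero]
        positivity
      · have hn : 0 < ‖z‖ := norm_pos_iff.mpr hz
        have h1 : ⟪β, z⟫ ≤ B * ‖z‖ := real_inner_le_norm β z
        have h2 := hlow z hz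
        by_cases ht : ‖z‖ ≤ T
        · have hfz : 0 < f z := hpos z hz
          have hBzT : B * ‖z‖ ≤ B * T := mul_le_mul_of_nonneg_left ht hB0
          linarith
        · push_neg at ht
          have hpow : B / c ≤ ‖z‖ ^ (r - 1) := by
            have hTr : T ^ (r - 1) = B / c := by
              rw [hTdef, ← Real.rpow_mul (div_nonneg hB0 hc.le)]
              rw [one_div, inv_mul_cancel₀ (by linarith : r - 1 ≠ 0), Real.rpow_one]
            calc B / c = T ^ (r - 1) := hTr.symm
              _ ≤ ‖z‖ ^ (r - 1) := Real.rpow_le_rpow hT0 ht.le (by linarith)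
          have hsplit : ‖z‖ ^ r = ‖z‖ ^ (r - 1) * ‖z‖ := by
            rw [← Real.rpow_add_one hn.ne' (r - 1)]
            ring_nf
          have hBle : B ≤ c * ‖z‖ ^ (r - 1) := by
            have := mul_le_mul_of_nonneg_left hpow hc.le
            rwa [mul_div_cancel₀ B hc.ne'] at this
          have hBz : B * ‖z‖ ≤ c * ‖z‖ ^ r := by
            rw [hsplit, ← mul_assoc]
            exact mul_le_mul_of_nonneg_right hBle hn.le
          linarith [mul_nonneg hB0 hT0]
  constructor
  · -- main identity
    intro β xh hmax
    set y := xh - x with hy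
    have hxh : xh = y + x := by simp [hy]
    set a := ⟪y, β⟫ with hadef
    set b := f y with hbdef
    have hmax' : ∀ w : EuclideanSpace ℝ (Fin d), ⟪w, β⟫ - f w ≤ a - b := by
      intro w
      have h := hmax (w + x)
      rw [hxh] at h
      simp only [add_sub_cancel_right, inner_add_left] at h
      rw [hadef, hbdef]
      linarith [h]
    have hSup : sSup (Set.range fun z => ⟪β, z⟫ - f z) = a - b := by
      apply le_antisymm
      · apply csSup_le (Set.range_nonempty _)
        rintro v ⟨z, rfl⟩
        dsimp only
        rw [real_inner_comm]
        exact hmax' z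
      · apply le_csSup (hbdd β)
        exact ⟨y, by dsimp only; rw [real_inner_comm]⟩
    have hab : a = r * b := by
      have hmaxloc : IsLocalMax (fun α : ℝ => α * a - α ^ r * b) 1 := by
        filter_upwards [Ioi_mem_nhds (one_pos : (0:ℝ) < 1)] with α hα
        have h1 := hmax' (α • y)
        have h2 : f (α • y) = α ^ r * b := hhom α hα y
        have h3 : ⟪α • y, β⟫ = α * a := real_inner_smul_left y β α
        simp only [Real.one_rpow, one_mul]
        linarith [h1, h2.symm.le]
      have hderiv : HasDerivAt (fun α : ℝ => α * a - α ^ r * b) (a - r * b) 1 := by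
        have h1 : HasDerivAt (fun α : ℝ => α * a) (1 * a) 1 :=
          (hasDerivAt_id 1).mul_const a
        have h2 : HasDerivAt (fun α : ℝ => α ^ r) (r * (1:ℝ) ^ (r - 1)) 1 :=
          Real.hasDerivAt_rpow_const (Or.inl one_ne_zero)
        have h3 := h1.sub ((h2.mul_const b))
        simp only [Real.one_rpow, one_mul, mul_one] at h3
        exact h3
      have := hmaxloc.hasDerivAt_eq_zero hderiv
      linarith
    rw [hSup, hxh, inner_add_left]
    linear_combination (1 - s) * hab - b * hs_eq
  · -- convexity
    refine ⟨convex_univ, ?_⟩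
    intro β1 _ β2 _ p q hp hq hpq
    simp only [smul_eq_mul]
    have key : sSup (Set.range fun z => ⟪p • β1 + q • β2, z⟫ - f z) ≤
        p * sSup (Set.range fun z => ⟪β1, z⟫ - f z) +
        q * sSup (Set.range fun z => ⟪β2, z⟫ - f z) := by
      apply csSup_le (Set.range_nonempty _)
      rintro v ⟨z, rfl⟩
      dsimp only
      have h1 : ⟪β1, z⟫ - f z ≤ sSup (Set.range fun z => ⟪β1, z⟫ - f z) :=
        le_csSup (hbdd β1) ⟨z, rfl⟩
      have h2 : ⟪β2, z⟫ - f z ≤ sSup (Set.range fun z => ⟪β2, z⟫ - f z) :=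
        le_csSup (hbdd β2) ⟨z, rfl⟩
      have hin : ⟪p • β1 + q • β2, z⟫ = p * ⟪β1, z⟫ + q * ⟪β2, z⟫ := by
        rw [inner_add_left, real_inner_smul_left, real_inner_smul_left]
      rw [hin]
      have hfz : p * f z + q * f z = f z := by rw [← add_mul, hpq, one_mul]
      linarith [mul_le_mul_of_nonneg_left h1 hp, mul_le_mul_of_nonneg_left h2 hq]
    have hx : ⟪x, p • β1 + q • β2⟫ = p * ⟪x, β1⟫ + q * ⟪x, β2⟫ := by
      rw [inner_add_right, real_inner_smul_right, real_inner_smul_right]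
    rw [hx]
    nlinarith [mul_le_mul_of_nonneg_left key hs_pos.le]
end
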